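/- arXiv:1806.05137 — 2 statements merged into one kernel-verified Lean document; each statement's English description precedes it below -/
import Mathlib

section
/- Let Q be a Borel probability measure on [0,1], h ∈ L²(Q), and define H(u) = ∫_{[0,u]} h dQ. Then for any bounded measurable α : [0,1] → ℝ, ∫∫_{[0,1]²} α(max(x,y)) h(x)h(y) dQ(x)dQ(y) = ∫_{[0,1]} α(u) dν(u), where ν is the (signed) Stieltjes measure of the function u ↦ H(u)². -/
open MeasureTheory
open scoped ENNReal NNReal

private lemma bdd_integrable {X : Type*} [MeasurableSpace X] {μ : Measure X}
    [IsFiniteMeasure μ] {g : X → ℝ} (hg : AEStronglyMeasurable g μ)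
    (hb : ∃ C, ∀ x, |g x| ≤ C) : Integrable g μ := by
  obtain ⟨C, hC⟩ := hb
  exact (memLp_top_of_bound hg C
    (Filter.Eventually.of_forall fun x => by simpa [Real.norm_eq_abs] using hC x)).integrable
    le_top

private lemma pair_aux {Q : Measure ℝ} [IsFiniteMeasure Q] {h : ℝ → ℝ}
    (hmeas : Measurable h) (hInt : Integrable h Q)
    (g : ℝ → ℝ) (hg : AEStronglyMeasurable g Q) (hb : ∃ C, ∀ x, |g x| ≤ C) :
    ∫ x, g x * h x ∂Q
      = ∫ x, g x ∂(Q.withDensity fun x => ((h x).toNNReal : ℝ≥0∞))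
        - ∫ x, g x ∂(Q.withDensity fun x => (((-h x)).toNNReal : ℝ≥0∞)) := by
  rw [integral_withDensity_eq_integral_smul hmeas.real_toNNReal,
      integral_withDensity_eq_integral_smul (show Measurable fun x => (-h x).toNNReal from hmeas.neg.real_toNNReal)]
  have e1 : ∀ x : ℝ, (h x).toNNReal • g x = g x * max (h x) 0 := fun x => by
    simp [NNReal.smul_def, Real.coe_toNNReal', mul_comm]
  have e2 : ∀ x : ℝ, (-h x).toNNReal • g x = g x * max (-h x) 0 := fun x => by
    simp [NNReal.smul_def, Real.coe_toNNReal', mul_comm]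
  have h1 : Integrable (fun x => g x * max (h x) 0) Q :=
    Integrable.bdd_mul (c := hb.choose) hInt.pos_part hg
      (Filter.Eventually.of_forall fun x => by simpa [Real.norm_eq_abs] using hb.choose_spec x)
  have h2 : Integrable (fun x => g x * max (-h x) 0) Q :=
    Integrable.bdd_mul (c := hb.choose) hInt.neg.pos_part hg
      (Filter.Eventually.of_forall fun x => by simpa [Real.norm_eq_abs] using hb.choose_spec x)
  simp only [e1, e2]
  rw [← integral_sub h1 h2]
  congr 1
  funext x
  rcases le_total (h x) 0 with hx | hx
  · rw [max_eq_right hx, max_eq_left (by linarith)]; ring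
  · rw [max_eq_left hx, max_eq_right (by linarith)]; ring

theorem stmt_11 (Q : Measure ℝ) [IsProbabilityMeasure Q]
    (hQsupp : Q (Set.Icc (0:ℝ) 1)ᶜ = 0)
    (h : ℝ → ℝ) (hmeas : Measurable h) (hL2 : MemLp h 2 Q)
    (H : ℝ → ℝ) (hH : ∀ u, H u = ∫ x in Set.Iic u, h x ∂Q)
    (νp νm : Measure ℝ) [IsFiniteMeasure νp] [IsFiniteMeasure νm]
    (hν : ∀ u : ℝ, (νp (Set.Iic u)).toReal - (νm (Set.Iic u)).toReal = (H u) ^ 2)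
    (α : ℝ → ℝ) (hαm : Measurable α) (hαb : ∃ C, ∀ x, |α x| ≤ C) :
    ∫ x, ∫ y, α (max x y) * (h x * h y) ∂Q ∂Q =
      (∫ u, α u ∂νp) - ∫ u, α u ∂νm := by
  obtain ⟨C, hC⟩ := hαb
  have hInt : Integrable h Q := hL2.integrable one_le_two
  set dp : ℝ → ℝ≥0∞ := fun x => ((h x).toNNReal : ℝ≥0∞) with hdp
  set dm : ℝ → ℝ≥0∞ := fun x => ((-h x).toNNReal : ℝ≥0∞) with hdm
  have hlt : ∀ f : ℝ → ℝ, Integrable f Q →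
      ∫⁻ x, ((f x).toNNReal : ℝ≥0∞) ∂Q ≠ ∞ := by
    intro f hf
    have hle : ∫⁻ x, ((f x).toNNReal : ℝ≥0∞) ∂Q ≤ ∫⁻ x, (‖f x‖₊ : ℝ≥0∞) ∂Q := by
      refine lintegral_mono fun x => ?_
      rw [← enorm_eq_nnnorm, Real.enorm_eq_ofReal_abs]
      exact ENNReal.ofReal_le_ofReal (le_abs_self _)
    exact ne_top_of_le_ne_top hf.2.ne hle
  set μp : Measure ℝ := Q.withDensity dp with hμp
  set μm : Measure ℝ := Q.withDensity dm with hμm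
  have hfinp : IsFiniteMeasure μp := isFiniteMeasure_withDensity (hlt h hInt)
  have hfinm : IsFiniteMeasure μm := isFiniteMeasure_withDensity (hlt _ hInt.neg)
  -- max map
  set T : ℝ × ℝ → ℝ := fun z => max z.1 z.2 with hT
  have hTm : Measurable T := measurable_fst.max measurable_snd
  have hκIic : ∀ (a b : Measure ℝ) [SFinite a] [SFinite b] (u : ℝ),
      ((a.prod b).map T) (Set.Iic u) = a (Set.Iic u) * b (Set.Iic u) := by
    intro a b _ _ u
    rw [Measure.map_apply hTm measurableSet_Iic]
    have : T ⁻¹' Set.Iic u = Set.Iic u ×ˢ Set.Iic u := by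
      ext z; simp [hT, max_le_iff, Prod.le_def]
    rw [this, Measure.prod_prod]
  -- μp, μm on Iic
  have key : ∀ u : ℝ, (μp (Set.Iic u)).toReal - (μm (Set.Iic u)).toReal = H u := by
    intro u
    rw [hH u,
      integral_eq_lintegral_pos_part_sub_lintegral_neg_part hInt.restrict,
      hμp, hμm, withDensity_apply _ measurableSet_Iic,
      withDensity_apply _ measurableSet_Iic]
    rfl
  -- measure identity
  have main : ((μp.prod μp).map T) + ((μm.prod μm).map T) + νm
      = ((μp.prod μm).map T) + ((μm.prod μp).map T) + νp := by
    refine Measure.ext_of_Iic _ _ fun u => ?_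
    simp only [Measure.add_apply, hκIic]
    have hA := measure_ne_top μp (Set.Iic u)
    have hB := measure_ne_top μm (Set.Iic u)
    have hP := measure_ne_top νp (Set.Iic u)
    have hM := measure_ne_top νm (Set.Iic u)
    rw [← ENNReal.toReal_eq_toReal_iff' (by finiteness) (by finiteness)]
    rw [ENNReal.toReal_add (by finiteness) (by finiteness),
        ENNReal.toReal_add (by finiteness) (by finiteness),
        ENNReal.toReal_add (by finiteness) (by finiteness),
        ENNReal.toReal_add (by finiteness) (by finiteness),
        ENNReal.toReal_mul, ENNReal.toReal_mul, ENNReal.toReal_mul,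
        ENNReal.toReal_mul]
    have e3 : ((μp (Set.Iic u)).toReal - (μm (Set.Iic u)).toReal) ^ 2 = H u ^ 2 := by
      rw [key u]
    linear_combination e3 - hν u
  -- integrability of α w.r.t. everything
  have hαInt : ∀ (ρ : Measure ℝ) [IsFiniteMeasure ρ], Integrable α ρ :=
    fun ρ _ => bdd_integrable hαm.aestronglyMeasurable ⟨C, hC⟩
  -- double integral = integral against mapped measure
  have hκint : ∀ (a b : Measure ℝ) [IsFiniteMeasure a] [IsFiniteMeasure b],
      ∫ u, α u ∂((a.prod b).map T) = ∫ x, ∫ y, α (max x y) ∂b ∂a := by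
    intro a b _ _
    rw [integral_map hTm.aemeasurable hαm.aestronglyMeasurable]
    exact integral_prod _ (bdd_integrable (hαm.comp hTm).aestronglyMeasurable ⟨C, fun z => hC _⟩)
  -- slice functions
  set Gp : ℝ → ℝ := fun x => ∫ y, α (max x y) ∂μp with hGp
  set Gm : ℝ → ℝ := fun x => ∫ y, α (max x y) ∂μm with hGm
  have hGpm : StronglyMeasurable Gp :=
    (hαm.comp hTm).stronglyMeasurable.integral_prod_right'
  have hGmm : StronglyMeasurable Gm :=
    (hαm.comp hTm).stronglyMeasurable.integral_prod_right'
  have hC0 : 0 ≤ C := le_trans (abs_nonneg _) (hC 0)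
  have hGpb : ∀ x, |Gp x| ≤ C * (μp Set.univ).toReal := fun x => by
    simpa [Real.norm_eq_abs, Measure.real] using
      norm_integral_le_of_norm_le_const (μ := μp) (f := fun y => α (max x y)) (C := C)
        (Filter.Eventually.of_forall fun y => by simpa [Real.norm_eq_abs] using hC _)
  have hGmb : ∀ x, |Gm x| ≤ C * (μm Set.univ).toReal := fun x => by
    simpa [Real.norm_eq_abs, Measure.real] using
      norm_integral_le_of_norm_le_const (μ := μm) (f := fun y => α (max x y)) (C := C)
        (Filter.Eventually.of_forall fun y => by simpa [Real.norm_eq_abs] using hC _)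
  -- inner integral
  have inner : ∀ x : ℝ, ∫ y, α (max x y) * (h x * h y) ∂Q = h x * (Gp x - Gm x) := by
    intro x
    have e : (fun y => α (max x y) * (h x * h y)) = fun y => h x * (α (max x y) * h y) := by
      funext y; ring
    rw [e, integral_const_mul]
    congr 1
    exact pair_aux hmeas hInt _ ((hαm.comp (measurable_const.max measurable_id)).aestronglyMeasurable)
      ⟨C, fun y => hC _⟩
  have outer : ∫ x, ∫ y, α (max x y) * (h x * h y) ∂Q ∂Q
      = (∫ x, Gp x - Gm x ∂μp) - ∫ x, Gp x - Gm x ∂μm := by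
    rw [show (fun x => ∫ y, α (max x y) * (h x * h y) ∂Q)
        = fun x => (Gp x - Gm x) * h x from funext fun x => by rw [inner x]; ring]
    exact pair_aux hmeas hInt _ ((hGpm.sub hGmm).aestronglyMeasurable)
      ⟨C * (μp Set.univ).toReal + C * (μm Set.univ).toReal, fun x =>
        (abs_sub _ _).trans (add_le_add (hGpb x) (hGmb x))⟩
  have hGpIntp : Integrable Gp μp := bdd_integrable hGpm.aestronglyMeasurable ⟨_, hGpb⟩
  have hGpIntm : Integrable Gp μm := bdd_integrable hGpm.aestronglyMeasurable ⟨_, hGpb⟩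
  have hGmIntp : Integrable Gm μp := bdd_integrable hGmm.aestronglyMeasurable ⟨_, hGmb⟩
  have hGmIntm : Integrable Gm μm := bdd_integrable hGmm.aestronglyMeasurable ⟨_, hGmb⟩
  have lhs : ∫ x, ∫ y, α (max x y) * (h x * h y) ∂Q ∂Q
      = (∫ u, α u ∂((μp.prod μp).map T)) - (∫ u, α u ∂((μp.prod μm).map T))
        - (∫ u, α u ∂((μm.prod μp).map T)) + ∫ u, α u ∂((μm.prod μm).map T) := by
    rw [outer, integral_sub hGpIntp hGmIntp, integral_sub hGpIntm hGmIntm,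
        hκint μp μp, hκint μp μm, hκint μm μp, hκint μm μm]
    ring
  -- integrate α against the measure identity
  have hsum := congrArg (fun ρ : Measure ℝ => ∫ u, α u ∂ρ) main
  rw [integral_add_measure ((hαInt _).add_measure (hαInt _)) (hαInt _),
      integral_add_measure (hαInt _) (hαInt _),
      integral_add_measure ((hαInt _).add_measure (hαInt _)) (hαInt _),
      integral_add_measure (hαInt _) (hαInt _)] at hsum
  rw [lhs]
  linarith [hsum]
end

section
/- Let Q be a probability measure on [0,1] and α : [0,1] → ℝ bounded measurable with ∫ α dQ² = 0, where Q² is the law of max of two i.i.d. Q-variables. Let φ_α(x,y) = α(max(x,y)) and ℒ* the double-centering projection with respect to Q. Then ⟨ℒ*φ_α, ℒ*φ_α⟩_{Q×Q} = ⟨α, α⟩_{Q²} − ⟨α, Sα⟩_{Q²}, where (Sα)(x) = α(x)Q(x) + 4∫_{(x,1]} α(t) dQ(t), with Q(x) = Q([0,x]) and the inner products ⟨f,g⟩_{Q²} = ∫ f g dQ². -/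
open MeasureTheory

/-- The double-centering projection `ℒ*` associated with a measure `Q`. -/
noncomputable def Lstar (Q : Measure ℝ) (φ : ℝ × ℝ → ℝ) : ℝ × ℝ → ℝ :=
  fun p => φ p - (∫ t, φ (p.1, t) ∂Q) - (∫ s, φ (s, p.2) ∂Q) + ∫ q, φ q ∂(Q.prod Q)

namespace Stmt17Aux
open Set

lemma bdd_int {X : Type*} [MeasurableSpace X] {μ : Measure X} [IsFiniteMeasure μ] {f : X → ℝ}
    (hm : AEStronglyMeasurable f μ) {C : ℝ} (hb : ∀ x, |f x| ≤ C) : Integrable f μ :=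
  Integrable.mono' (integrable_const C) hm (Filter.Eventually.of_forall fun x => by
    simpa [Real.norm_eq_abs] using hb x)

variable {Q : Measure ℝ} [IsProbabilityMeasure Q]

lemma toReal_le_one (s : Set ℝ) : (Q s).toReal ≤ 1 := by
  have := ENNReal.toReal_mono (a := Q s) (b := 1) (by simp) prob_le_one
  simpa using this

lemma bdd_setint {f : ℝ → ℝ} {C : ℝ} (hb : ∀ x, |f x| ≤ C) (s : Set ℝ) :
    |∫ t in s, f t ∂Q| ≤ C := by
  have hC : 0 ≤ C := (abs_nonneg _).trans (hb 0)
  have h1 : ‖∫ t in s, f t ∂Q‖ ≤ C * ((Q.restrict s) Set.univ).toReal :=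
    norm_integral_le_of_norm_le_const (μ := Q.restrict s) (Filter.Eventually.of_forall fun x => by
      simpa [Real.norm_eq_abs] using hb x)
  rw [Real.norm_eq_abs] at h1
  calc |∫ t in s, f t ∂Q| ≤ C * ((Q.restrict s) Set.univ).toReal := h1
    _ ≤ C * 1 := by
        rw [Measure.restrict_apply_univ]
        exact mul_le_mul_of_nonneg_left (toReal_le_one _) hC
    _ = C := mul_one C

lemma bdd_intQ {f : ℝ → ℝ} {C : ℝ} (hb : ∀ x, |f x| ≤ C) :
    |∫ t, f t ∂Q| ≤ C := by
  simpa using bdd_setint (Q := Q) hb Set.univ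

lemma meas_paramint {Ψ : ℝ × ℝ → ℝ} (hm : Measurable Ψ) :
    Measurable fun x => ∫ y, Ψ (x, y) ∂Q :=
  hm.stronglyMeasurable.integral_prod_right'.measurable

lemma swap_int' {Ψ : ℝ → ℝ → ℝ} (hm : Measurable fun p : ℝ × ℝ => Ψ p.1 p.2) {C : ℝ}
    (hb : ∀ x y, |Ψ x y| ≤ C) :
    ∫ x, ∫ y, Ψ x y ∂Q ∂Q = ∫ y, ∫ x, Ψ x y ∂Q ∂Q :=
  integral_integral_swap (f := Ψ) (bdd_int hm.aestronglyMeasurable (fun p => hb p.1 p.2))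

noncomputable def Fq (Q : Measure ℝ) : ℝ → ℝ := fun x => (Q (Set.Iic x)).toReal
noncomputable def gq (Q : Measure ℝ) (α : ℝ → ℝ) : ℝ → ℝ := fun x => ∫ t, α (max x t) ∂Q
noncomputable def hq (Q : Measure ℝ) (α : ℝ → ℝ) : ℝ → ℝ := fun x => ∫ t in Set.Ioi x, α t ∂Q

lemma Fq_mono : Monotone (Fq Q) := fun a b hab =>
  ENNReal.toReal_mono (measure_ne_top _ _) (measure_mono (Set.Iic_subset_Iic.2 hab))

lemma Fq_meas : Measurable (Fq Q) := Fq_mono.measurable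

lemma Fq_nonneg (x : ℝ) : 0 ≤ Fq Q x := ENNReal.toReal_nonneg
lemma Fq_le_one (x : ℝ) : Fq Q x ≤ 1 := toReal_le_one _
lemma Fq_abs (x : ℝ) : |Fq Q x| ≤ 1 := abs_le.2 ⟨by linarith [Fq_nonneg (Q := Q) x], Fq_le_one x⟩

lemma split_max {f : ℝ → ℝ} (hm : Measurable f) {C : ℝ} (hb : ∀ x, |f x| ≤ C) (x : ℝ) :
    ∫ t, f (max x t) ∂Q = f x * Fq Q x + ∫ t in Set.Ioi x, f t ∂Q := by
  have hfi : Integrable (fun t => f (max x t)) Q :=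
    bdd_int ((hm.comp (measurable_const.max measurable_id)).aestronglyMeasurable) (fun t => hb (max x t))
  have key := integral_add_compl (measurableSet_Iic (a := x)) hfi
  rw [← key, compl_Iic]
  congr 1
  have e1 : ∫ t in Set.Iic x, f (max x t) ∂Q = ∫ t in Set.Iic x, f x ∂Q :=
    setIntegral_congr_fun measurableSet_Iic fun t ht => by
      simp [max_eq_left (Set.mem_Iic.1 ht)]
  rw [e1, setIntegral_const, smul_eq_mul, mul_comm, Fq]
  rfl
  · exact setIntegral_congr_fun measurableSet_Ioi fun t ht => by
      simp [max_eq_right (le_of_lt (Set.mem_Ioi.1 ht))]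


variable {α : ℝ → ℝ} {C : ℝ}

lemma hq_eq (x : ℝ) : hq Q α x = ∫ y, (if x < y then α y else 0) ∂Q := by
  rw [hq, ← integral_indicator measurableSet_Ioi]
  refine integral_congr_ae (Filter.Eventually.of_forall fun y => ?_)
  simp [Set.indicator_apply, Set.mem_Ioi]

lemma psi_meas (hαm : Measurable α) :
    Measurable fun p : ℝ × ℝ => if p.1 < p.2 then α p.2 else 0 :=
  Measurable.ite (measurableSet_lt measurable_fst measurable_snd)
    (hαm.comp measurable_snd) measurable_const

lemma hq_meas (hαm : Measurable α) : Measurable (hq Q α) := by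
  have e : hq Q α = fun x => ∫ y, (fun p : ℝ × ℝ => if p.1 < p.2 then α p.2 else 0) (x, y) ∂Q :=
    funext fun x => hq_eq x
  rw [e]; exact meas_paramint (psi_meas hαm)

lemma hq_abs (hb : ∀ x, |α x| ≤ C) (x : ℝ) : |hq Q α x| ≤ C := bdd_setint hb _

lemma map_max_integral {f : ℝ → ℝ} (hm : Measurable f) :
    ∫ u, f u ∂((Q.prod Q).map fun p : ℝ × ℝ => max p.1 p.2) = ∫ p, f (max p.1 p.2) ∂(Q.prod Q) :=
  integral_map (measurable_fst.max measurable_snd).aemeasurable hm.aestronglyMeasurable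

lemma prod_max_eq [NullSingletonClass Q] (hm : Measurable α) (hb : ∀ x, |α x| ≤ C) :
    ∫ p, α (max p.1 p.2) ∂(Q.prod Q) = 2 * ∫ u, α u * Fq Q u ∂Q := by
  have hC : 0 ≤ C := (abs_nonneg _).trans (hb 0)
  have hφm : Measurable fun p : ℝ × ℝ => α (max p.1 p.2) :=
    hm.comp (measurable_fst.max measurable_snd)
  have step1 : ∫ p, α (max p.1 p.2) ∂(Q.prod Q) = ∫ x, ∫ y, α (max x y) ∂Q ∂Q :=
    integral_prod _ (bdd_int hφm.aestronglyMeasurable fun p => hb _)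
  rw [step1]
  have e1 : ∀ x : ℝ, (∫ y, α (max x y) ∂Q) = α x * Fq Q x + hq Q α x :=
    fun x => split_max hm hb x
  simp only [e1]
  have I1 : Integrable (fun x => α x * Fq Q x) Q :=
    bdd_int ((hm.mul Fq_meas).aestronglyMeasurable) (C := C) fun x => by
      calc |α x * Fq Q x| = |α x| * |Fq Q x| := abs_mul _ _
        _ ≤ C * 1 := mul_le_mul (hb x) (Fq_abs x) (abs_nonneg _) hC
        _ = C := mul_one C
  have I2 : Integrable (hq Q α) Q := bdd_int (hq_meas hm).aestronglyMeasurable (hq_abs hb)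
  rw [integral_add I1 I2]
  have h2 : ∫ x, hq Q α x ∂Q = ∫ u, α u * Fq Q u ∂Q := by
    have e2 : ∀ x, hq Q α x = ∫ y, (if x < y then α y else 0) ∂Q := hq_eq
    simp only [e2]
    have hsw : (∫ x, ∫ y, (if x < y then α y else 0) ∂Q ∂Q)
        = ∫ y, ∫ x, (if x < y then α y else 0) ∂Q ∂Q :=
      swap_int' (psi_meas hm) (C := C)
        (fun x y => by by_cases h : x < y <;> simp [h, hb y, hC])
    rw [hsw]
    refine integral_congr_ae (Filter.Eventually.of_forall fun y => ?_)
    have e3 : ∀ x : ℝ, (if x < y then α y else 0)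
        = (Set.Iio y).indicator (fun _ => α y) x := fun x => by
      simp [Set.indicator_apply, Set.mem_Iio]
    simp only [e3]
    rw [integral_indicator_const _ measurableSet_Iio, smul_eq_mul, measureReal_def, Fq,
      measure_congr (Iio_ae_eq_Iic (a := y))]
    ring
  rw [h2]; ring

lemma key7 [NullSingletonClass Q] (hm : Measurable α) (hb : ∀ x, |α x| ≤ C) :
    ∫ x, hq Q α x * hq Q α x ∂Q = 2 * ∫ x, α x * Fq Q x * hq Q α x ∂Q := by
  have hC : 0 ≤ C := (abs_nonneg _).trans (hb 0)
  have hhm : Measurable (hq Q α) := hq_meas hm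
  have hhb : ∀ x, |hq Q α x| ≤ C := hq_abs hb
  have hF' : ∀ r : ℝ, (Q (Set.Iio r)).toReal = Fq Q r := fun r => by
    rw [Fq, measure_congr (Iio_ae_eq_Iic (a := r))]
  -- Step A
  have stepA : ∫ x, hq Q α x * hq Q α x ∂Q
      = ∫ y, α y * ∫ x in Set.Iio y, hq Q α x ∂Q ∂Q := by
    have e1 : ∀ x, hq Q α x * hq Q α x = ∫ y, (if x < y then α y else 0) * hq Q α x ∂Q := by
      intro x
      rw [integral_mul_const, ← hq_eq (Q := Q) (α := α) x]
    simp only [e1]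
    have hsw : (∫ x, ∫ y, (if x < y then α y else 0) * hq Q α x ∂Q ∂Q)
        = ∫ y, ∫ x, (if x < y then α y else 0) * hq Q α x ∂Q ∂Q :=
      swap_int' ((psi_meas hm).mul (hhm.comp measurable_fst)) (C := C * C)
        (fun x y => by
          by_cases hxy : x < y
          · simp only [hxy, if_true]
            calc |α y * hq Q α x| = |α y| * |hq Q α x| := abs_mul _ _
              _ ≤ C * C := mul_le_mul (hb y) (hhb x) (abs_nonneg _) hC
          · simp [hxy, mul_nonneg hC hC])
    rw [hsw]
    refine integral_congr_ae (Filter.Eventually.of_forall fun y => ?_)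
    have e2 : ∀ x, (if x < y then α y else 0) * hq Q α x
        = (Set.Iio y).indicator (fun x => α y * hq Q α x) x := by
      intro x; by_cases hxy : x < y <;> simp [Set.indicator_apply, Set.mem_Iio, hxy]
    simp only [e2]
    rw [integral_indicator measurableSet_Iio, integral_const_mul]
  -- Step B
  have stepB : ∀ y, ∫ x in Set.Iio y, hq Q α x ∂Q
      = ∫ r, α r * (Q (Set.Iio (min y r))).toReal ∂Q := by
    intro y
    have hΘm : Measurable fun p : ℝ × ℝ => if p.1 < y ∧ p.1 < p.2 then α p.2 else 0 := by
      refine Measurable.ite ?_ (hm.comp measurable_snd) measurable_const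
      exact (measurableSet_lt measurable_fst measurable_const).inter
        (measurableSet_lt measurable_fst measurable_snd)
    have e1 : ∫ x in Set.Iio y, hq Q α x ∂Q
        = ∫ x, ∫ r, (if x < y ∧ x < r then α r else 0) ∂Q ∂Q := by
      rw [← integral_indicator measurableSet_Iio]
      refine integral_congr_ae (Filter.Eventually.of_forall fun x => ?_)
      by_cases hxy : x < y
      · simp only [Set.indicator_apply, Set.mem_Iio, hxy, if_true]
        rw [hq_eq (Q := Q) (α := α) x]
        refine integral_congr_ae (Filter.Eventually.of_forall fun r => ?_)
        by_cases hxr : x < r <;> simp [hxy, hxr]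
      · simp only [Set.indicator_apply, Set.mem_Iio, hxy, if_false]
        have e : ∀ r, (if x < y ∧ x < r then α r else 0) = 0 := fun r => by simp [hxy]
        simp [e]
    have hsw : (∫ x, ∫ r, (if x < y ∧ x < r then α r else 0) ∂Q ∂Q)
        = ∫ r, ∫ x, (if x < y ∧ x < r then α r else 0) ∂Q ∂Q :=
      swap_int' hΘm (C := C)
        (fun x r => by by_cases hc : x < y ∧ x < r <;> simp [hc, hb r, hC])
    rw [e1, hsw]
    refine integral_congr_ae (Filter.Eventually.of_forall fun r => ?_)
    have e2 : ∀ x : ℝ, (if x < y ∧ x < r then α r else 0)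
        = (Set.Iio (min y r)).indicator (fun _ => α r) x := by
      intro x; simp [Set.indicator_apply, Set.mem_Iio, lt_min_iff]
    simp only [e2]
    rw [integral_indicator_const _ measurableSet_Iio, smul_eq_mul, mul_comm, measureReal_def]
  -- Step C
  have hFminmeas : ∀ y : ℝ, Measurable fun r => (Q (Set.Iio (min y r))).toReal := by
    intro y
    have hmono : Monotone fun r : ℝ => (Q (Set.Iio r)).toReal := fun a b hab =>
      ENNReal.toReal_mono (measure_ne_top _ _) (measure_mono (Set.Iio_subset_Iio hab))
    exact hmono.measurable.comp (measurable_const.min measurable_id)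
  have stepC : ∀ y, ∫ r, α r * (Q (Set.Iio (min y r))).toReal ∂Q
      = (∫ r in Set.Iic y, α r * Fq Q r ∂Q) + Fq Q y * hq Q α y := by
    intro y
    have hfi : Integrable (fun r => α r * (Q (Set.Iio (min y r))).toReal) Q :=
      bdd_int ((hm.mul (hFminmeas y)).aestronglyMeasurable) (C := C) fun r => by
        calc |α r * (Q (Set.Iio (min y r))).toReal| 
            = |α r| * |(Q (Set.Iio (min y r))).toReal| := abs_mul _ _
          _ ≤ C * 1 := mul_le_mul (hb r)
              (by rw [abs_of_nonneg ENNReal.toReal_nonneg]; exact toReal_le_one _) (abs_nonneg _) hC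
          _ = C := mul_one C
    rw [← integral_add_compl (measurableSet_Iic (a := y)) hfi, compl_Iic]
    congr 1
    · exact setIntegral_congr_fun measurableSet_Iic fun r hr => by
        rw [min_eq_right (Set.mem_Iic.1 hr), hF' r]
    · have e : ∫ r in Set.Ioi y, α r * (Q (Set.Iio (min y r))).toReal ∂Q
          = ∫ r in Set.Ioi y, α r * Fq Q y ∂Q :=
        setIntegral_congr_fun measurableSet_Ioi fun r hr => by
          rw [min_eq_left (le_of_lt (Set.mem_Ioi.1 hr)), hF' y]
      rw [e, integral_mul_const, mul_comm]
      rfl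
  rw [stepA]
  simp only [stepB, stepC]
  -- expand
  have hKeq : ∀ y : ℝ, (∫ r in Set.Iic y, α r * Fq Q r ∂Q)
      = ∫ r, (if r ≤ y then α r * Fq Q r else 0) ∂Q := by
    intro y
    rw [← integral_indicator measurableSet_Iic]
    refine integral_congr_ae (Filter.Eventually.of_forall fun r => ?_)
    by_cases hc : r ≤ y <;> simp [Set.indicator_apply, Set.mem_Iic, hc]
  have hαFb : ∀ r, |α r * Fq Q r| ≤ C := fun r => by
    calc |α r * Fq Q r| = |α r| * |Fq Q r| := abs_mul _ _
      _ ≤ C * 1 := mul_le_mul (hb r) (Fq_abs r) (abs_nonneg _) hC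
      _ = C := mul_one C
  have hKmeas : Measurable fun y => ∫ r in Set.Iic y, α r * Fq Q r ∂Q := by
    have e : (fun y => ∫ r in Set.Iic y, α r * Fq Q r ∂Q)
        = fun y => ∫ r, (fun p : ℝ × ℝ => if p.2 ≤ p.1 then α p.2 * Fq Q p.2 else 0) (y, r) ∂Q :=
      funext fun y => hKeq y
    rw [e]
    exact meas_paramint (Measurable.ite (measurableSet_le measurable_snd measurable_fst)
      ((hm.comp measurable_snd).mul (Fq_meas.comp measurable_snd)) measurable_const)
  have hKb : ∀ y, |∫ r in Set.Iic y, α r * Fq Q r ∂Q| ≤ C := fun y => bdd_setint hαFb _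
  have Ia : Integrable (fun y => α y * ∫ r in Set.Iic y, α r * Fq Q r ∂Q) Q :=
    bdd_int ((hm.mul hKmeas).aestronglyMeasurable) (C := C * C) fun y => by
      calc |α y * ∫ r in Set.Iic y, α r * Fq Q r ∂Q|
          = |α y| * |∫ r in Set.Iic y, α r * Fq Q r ∂Q| := abs_mul _ _
        _ ≤ C * C := mul_le_mul (hb y) (hKb y) (abs_nonneg _) hC
  have Ib : Integrable (fun y => α y * (Fq Q y * hq Q α y)) Q :=
    bdd_int ((hm.mul (Fq_meas.mul hhm)).aestronglyMeasurable) (C := C * C) fun y => by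
      calc |α y * (Fq Q y * hq Q α y)| = |α y| * |Fq Q y * hq Q α y| := abs_mul _ _
        _ ≤ C * C := by
            refine mul_le_mul (hb y) ?_ (abs_nonneg _) hC
            calc |Fq Q y * hq Q α y| = |Fq Q y| * |hq Q α y| := abs_mul _ _
              _ ≤ 1 * C := mul_le_mul (Fq_abs y) (hhb y) (abs_nonneg _) zero_le_one
              _ = C := one_mul C
  have hdist : ∀ y : ℝ, α y * ((∫ r in Set.Iic y, α r * Fq Q r ∂Q) + Fq Q y * hq Q α y)
      = α y * (∫ r in Set.Iic y, α r * Fq Q r ∂Q) + α y * (Fq Q y * hq Q α y) := fun y => by ring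
  simp only [hdist]
  rw [integral_add Ia Ib]
  -- termK
  have termK : ∫ y, α y * ∫ r in Set.Iic y, α r * Fq Q r ∂Q ∂Q
      = ∫ r, α r * Fq Q r * hq Q α r ∂Q := by
    have e1 : ∀ y : ℝ, α y * ∫ r in Set.Iic y, α r * Fq Q r ∂Q
        = ∫ r, (if r ≤ y then α y * (α r * Fq Q r) else 0) ∂Q := by
      intro y
      have e : ∀ r : ℝ, (if r ≤ y then α y * (α r * Fq Q r) else 0)
          = (Set.Iic y).indicator (fun r => α y * (α r * Fq Q r)) r := fun r => by
        by_cases hc : r ≤ y <;> simp [Set.indicator_apply, Set.mem_Iic, hc]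
      simp only [e]
      rw [integral_indicator measurableSet_Iic, integral_const_mul]
    simp only [e1]
    have hsw : (∫ y, ∫ r, (if r ≤ y then α y * (α r * Fq Q r) else 0) ∂Q ∂Q)
        = ∫ r, ∫ y, (if r ≤ y then α y * (α r * Fq Q r) else 0) ∂Q ∂Q :=
      swap_int' (Ψ := fun y r => if r ≤ y then α y * (α r * Fq Q r) else 0)
        (Measurable.ite (measurableSet_le measurable_snd measurable_fst)
          ((hm.comp measurable_fst).mul ((hm.comp measurable_snd).mul
            (Fq_meas.comp measurable_snd))) measurable_const)
        (C := C * (C * 1)) (fun y r => by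
          by_cases hc : r ≤ y
          · simp only [hc, if_true]
            calc |α y * (α r * Fq Q r)| = |α y| * |α r * Fq Q r| := abs_mul _ _
              _ ≤ C * (C * 1) := mul_le_mul (hb y) (by simpa using hαFb r)
                  (abs_nonneg _) hC
          · simp only [hc, if_false, abs_zero]
            positivity
          )
    rw [hsw]
    refine integral_congr_ae (Filter.Eventually.of_forall fun r => ?_)
    have e2 : ∀ y : ℝ, (if r ≤ y then α y * (α r * Fq Q r) else 0)
        = (Set.Ici r).indicator (fun y => α y * (α r * Fq Q r)) y := fun y => by
      by_cases hc : r ≤ y <;> simp [Set.indicator_apply, Set.mem_Ici, hc]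
    simp only [e2]
    rw [integral_indicator measurableSet_Ici, integral_mul_const,
      setIntegral_congr_set (Ioi_ae_eq_Ici (a := r)).symm]
    show hq Q α r * (α r * Fq Q r) = α r * Fq Q r * hq Q α r
    ring
  rw [termK]
  simp only [← mul_assoc]
  ring

end Stmt17Aux

open Stmt17Aux

theorem stmt_17 (Q : Measure ℝ) [IsProbabilityMeasure Q] [NullSingletonClass Q]
    (hQsupp : Q (Set.Icc (0:ℝ) 1)ᶜ = 0)
    (Q2 : Measure ℝ) (hQ2 : Q2 = (Q.prod Q).map (fun p : ℝ × ℝ => max p.1 p.2))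
    (α : ℝ → ℝ) (hαm : Measurable α) (hαb : ∃ C, ∀ x, |α x| ≤ C)
    (hmean : ∫ u, α u ∂Q2 = 0)
    (Sα : ℝ → ℝ)
    (hS : ∀ x, Sα x = α x * (Q (Set.Icc 0 x)).toReal + 4 * ∫ t in Set.Ioc x 1, α t ∂Q) :
    ∫ p, (Lstar Q (fun p : ℝ × ℝ => α (max p.1 p.2)) p) ^ 2 ∂(Q.prod Q) =
      (∫ u, (α u) ^ 2 ∂Q2) - ∫ u, α u * Sα u ∂Q2 := by
  classical
  obtain ⟨C, hC⟩ := hαb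
  have hC0 : 0 ≤ C := (abs_nonneg _).trans (hC 0)
  have hφm : Measurable fun p : ℝ × ℝ => α (max p.1 p.2) :=
    hαm.comp (measurable_fst.max measurable_snd)
  have hφi : Integrable (fun p : ℝ × ℝ => α (max p.1 p.2)) (Q.prod Q) :=
    bdd_int hφm.aestronglyMeasurable (fun p => hC _)
  have hgmeas : Measurable (gq Q α) := meas_paramint hφm
  have hgb : ∀ x, |gq Q α x| ≤ C := fun x => bdd_intQ (fun t => hC _)
  have hhm : Measurable (hq Q α) := hq_meas hαm
  have hhb : ∀ x, |hq Q α x| ≤ C := hq_abs hC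
  have hm0 : ∫ p, α (max p.1 p.2) ∂(Q.prod Q) = 0 := by
    rw [← map_max_integral hαm, ← hQ2]; exact hmean
  have hgsplit : ∀ x, gq Q α x = α x * Fq Q x + hq Q α x := fun x => split_max hαm hC x
  have hg0 : ∫ x, gq Q α x ∂Q = 0 := by
    have h1 : ∫ p, α (max p.1 p.2) ∂(Q.prod Q) = ∫ x, gq Q α x ∂Q := integral_prod _ hφi
    rw [← h1, hm0]
  have hgcomm : ∀ y, (∫ s, α (max s y) ∂Q) = gq Q α y := by
    intro y
    rw [show (fun s => α (max s y)) = fun s => α (max y s) from funext fun s => by rw [max_comm]]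
    rfl
  have hLs : ∀ p : ℝ × ℝ, Lstar Q (fun p : ℝ × ℝ => α (max p.1 p.2)) p
      = α (max p.1 p.2) - gq Q α p.1 - gq Q α p.2 := by
    intro p
    show α (max p.1 p.2) - (∫ t, α (max p.1 t) ∂Q) - (∫ s, α (max s p.2) ∂Q)
        + (∫ q, α (max q.1 q.2) ∂(Q.prod Q)) = _
    rw [hm0, hgcomm p.2, add_zero]
    rfl
  simp only [hLs]
  set A := ∫ x, gq Q α x ^ 2 ∂Q with hA
  have hmulCC : ∀ a b : ℝ, |a| ≤ C → |b| ≤ C → |a * b| ≤ C * C := fun a b ha hb => by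
    rw [abs_mul]; exact mul_le_mul ha hb (abs_nonneg _) hC0
  have i1 : Integrable (fun p : ℝ × ℝ => α (max p.1 p.2) ^ 2) (Q.prod Q) :=
    bdd_int (hφm.pow_const 2).aestronglyMeasurable
      (fun p => by rw [abs_pow]; exact pow_le_pow_left₀ (abs_nonneg _) (hC _) 2)
  have i2 : Integrable (fun p : ℝ × ℝ => α (max p.1 p.2) * gq Q α p.1) (Q.prod Q) :=
    bdd_int (hφm.mul (hgmeas.comp measurable_fst)).aestronglyMeasurable
      (fun p => hmulCC _ _ (hC _) (hgb _))
  have i3 : Integrable (fun p : ℝ × ℝ => α (max p.1 p.2) * gq Q α p.2) (Q.prod Q) :=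
    bdd_int (hφm.mul (hgmeas.comp measurable_snd)).aestronglyMeasurable
      (fun p => hmulCC _ _ (hC _) (hgb _))
  have i4 : Integrable (fun p : ℝ × ℝ => gq Q α p.1 ^ 2) (Q.prod Q) :=
    bdd_int ((hgmeas.comp measurable_fst).pow_const 2).aestronglyMeasurable
      (fun p => by rw [abs_pow]; exact pow_le_pow_left₀ (abs_nonneg _) (hgb _) 2)
  have i5 : Integrable (fun p : ℝ × ℝ => gq Q α p.2 ^ 2) (Q.prod Q) :=
    bdd_int ((hgmeas.comp measurable_snd).pow_const 2).aestronglyMeasurable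
      (fun p => by rw [abs_pow]; exact pow_le_pow_left₀ (abs_nonneg _) (hgb _) 2)
  have i6 : Integrable (fun p : ℝ × ℝ => gq Q α p.1 * gq Q α p.2) (Q.prod Q) :=
    bdd_int ((hgmeas.comp measurable_fst).mul (hgmeas.comp measurable_snd)).aestronglyMeasurable
      (fun p => hmulCC _ _ (hgb _) (hgb _))
  have expand : ∀ p : ℝ × ℝ,
      (α (max p.1 p.2) - gq Q α p.1 - gq Q α p.2) ^ 2
      = α (max p.1 p.2) ^ 2 - 2 * (α (max p.1 p.2) * gq Q α p.1)
        - 2 * (α (max p.1 p.2) * gq Q α p.2) + gq Q α p.1 ^ 2 + gq Q α p.2 ^ 2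
        + 2 * (gq Q α p.1 * gq Q α p.2) := fun p => by ring
  simp only [expand]
  have i2' : Integrable (fun p : ℝ × ℝ => 2 * (α (max p.1 p.2) * gq Q α p.1)) (Q.prod Q) :=
    i2.const_mul 2
  have i3' : Integrable (fun p : ℝ × ℝ => 2 * (α (max p.1 p.2) * gq Q α p.2)) (Q.prod Q) :=
    i3.const_mul 2
  have i6' : Integrable (fun p : ℝ × ℝ => 2 * (gq Q α p.1 * gq Q α p.2)) (Q.prod Q) :=
    i6.const_mul 2
  have I2 : Integrable (fun p : ℝ × ℝ => α (max p.1 p.2) ^ 2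
      - 2 * (α (max p.1 p.2) * gq Q α p.1)) (Q.prod Q) := i1.sub i2'
  have I3 : Integrable (fun p : ℝ × ℝ => α (max p.1 p.2) ^ 2
      - 2 * (α (max p.1 p.2) * gq Q α p.1)
      - 2 * (α (max p.1 p.2) * gq Q α p.2)) (Q.prod Q) := I2.sub i3'
  have I4 : Integrable (fun p : ℝ × ℝ => α (max p.1 p.2) ^ 2
      - 2 * (α (max p.1 p.2) * gq Q α p.1)
      - 2 * (α (max p.1 p.2) * gq Q α p.2) + gq Q α p.1 ^ 2) (Q.prod Q) := I3.add i4
  have I5 : Integrable (fun p : ℝ × ℝ => α (max p.1 p.2) ^ 2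
      - 2 * (α (max p.1 p.2) * gq Q α p.1)
      - 2 * (α (max p.1 p.2) * gq Q α p.2) + gq Q α p.1 ^ 2 + gq Q α p.2 ^ 2) (Q.prod Q) :=
    I4.add i5
  rw [integral_add I5 i6', integral_add I4 i5, integral_add I3 i4, integral_sub I2 i3',
    integral_sub i1 i2', integral_const_mul 2, integral_const_mul 2, integral_const_mul 2]
  -- values of the six integrals
  have T1 : ∫ p, α (max p.1 p.2) ^ 2 ∂(Q.prod Q) = ∫ u, (α u) ^ 2 ∂Q2 := by
    rw [hQ2]; exact (map_max_integral (hαm.pow_const 2)).symm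
  have T2 : ∫ p, α (max p.1 p.2) * gq Q α p.1 ∂(Q.prod Q) = A := by
    have h1 : ∫ p, α (max p.1 p.2) * gq Q α p.1 ∂(Q.prod Q)
        = ∫ x, ∫ y, α (max x y) * gq Q α x ∂Q ∂Q := integral_prod _ i2
    rw [h1, hA]
    refine integral_congr_ae (Filter.Eventually.of_forall fun x => ?_)
    show (∫ y, α (max x y) * gq Q α x ∂Q) = gq Q α x ^ 2
    rw [integral_mul_const]
    show gq Q α x * gq Q α x = gq Q α x ^ 2
    rw [pow_two]
  have T3 : ∫ p, α (max p.1 p.2) * gq Q α p.2 ∂(Q.prod Q) = A := by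
    have h1 : ∫ p, α (max p.1 p.2) * gq Q α p.2 ∂(Q.prod Q)
        = ∫ y, ∫ x, α (max x y) * gq Q α y ∂Q ∂Q := integral_prod_symm _ i3
    rw [h1, hA]
    refine integral_congr_ae (Filter.Eventually.of_forall fun y => ?_)
    show (∫ x, α (max x y) * gq Q α y ∂Q) = gq Q α y ^ 2
    rw [integral_mul_const, hgcomm y, pow_two]
  have T4 : ∫ p, gq Q α p.1 ^ 2 ∂(Q.prod Q) = A := by
    have h1 : ∫ p, gq Q α p.1 ^ 2 ∂(Q.prod Q) = ∫ x, ∫ _y, gq Q α x ^ 2 ∂Q ∂Q :=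
      integral_prod _ i4
    rw [h1, hA]
    refine integral_congr_ae (Filter.Eventually.of_forall fun x => ?_)
    simp [measure_univ]
  have T5 : ∫ p, gq Q α p.2 ^ 2 ∂(Q.prod Q) = A := by
    have h1 : ∫ p, gq Q α p.2 ^ 2 ∂(Q.prod Q) = ∫ y, ∫ _x, gq Q α y ^ 2 ∂Q ∂Q :=
      integral_prod_symm _ i5
    rw [h1, hA]
    refine integral_congr_ae (Filter.Eventually.of_forall fun y => ?_)
    simp [measure_univ]
  have T6 : ∫ p, gq Q α p.1 * gq Q α p.2 ∂(Q.prod Q) = 0 := by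
    have h1 : ∫ p, gq Q α p.1 * gq Q α p.2 ∂(Q.prod Q)
        = ∫ x, ∫ y, gq Q α x * gq Q α y ∂Q ∂Q := integral_prod _ i6
    rw [h1]
    have e : ∀ x, (∫ y, gq Q α x * gq Q α y ∂Q) = 0 := fun x => by
      rw [integral_const_mul, hg0, mul_zero]
    simp only [e, integral_zero]
  rw [T1, T2, T3, T4, T5, T6]
  -- Step 2 : the Sα side
  have hIocb : ∀ x : ℝ, |∫ t in Set.Ioc x 1, α t ∂Q| ≤ C := fun x => bdd_setint hC _
  have hIocmeas : Measurable fun x => ∫ t in Set.Ioc x 1, α t ∂Q := by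
    have e : (fun x => ∫ t in Set.Ioc x 1, α t ∂Q)
        = fun x => ∫ t, (fun p : ℝ × ℝ => if p.1 < p.2 ∧ p.2 ≤ 1 then α p.2 else 0) (x, t) ∂Q := by
      funext x
      rw [← integral_indicator measurableSet_Ioc]
      refine integral_congr_ae (Filter.Eventually.of_forall fun t => ?_)
      by_cases hc : x < t ∧ t ≤ 1 <;> simp [Set.indicator_apply, Set.mem_Ioc, hc]
    rw [e]
    exact meas_paramint (Q := Q)
      (Ψ := fun p : ℝ × ℝ => if p.1 < p.2 ∧ p.2 ≤ 1 then α p.2 else 0)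
      (by
        refine Measurable.ite ?_ (hαm.comp measurable_snd) measurable_const
        exact (measurableSet_lt measurable_fst measurable_snd).inter
          (measurableSet_le measurable_snd measurable_const))
  have hF₀meas : Measurable fun x : ℝ => (Q (Set.Icc 0 x)).toReal := by
    have hmono : Monotone fun x : ℝ => (Q (Set.Icc 0 x)).toReal := fun a b hab =>
      ENNReal.toReal_mono (measure_ne_top _ _) (measure_mono (Set.Icc_subset_Icc_right hab))
    exact hmono.measurable
  have hSαm : Measurable Sα := by
    rw [funext hS]
    exact (hαm.mul hF₀meas).add (measurable_const.mul hIocmeas)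
  have hSαb : ∀ x, |Sα x| ≤ 5 * C := fun x => by
    rw [hS x]
    calc |α x * (Q (Set.Icc 0 x)).toReal + 4 * ∫ t in Set.Ioc x 1, α t ∂Q|
        ≤ |α x * (Q (Set.Icc 0 x)).toReal| + |4 * ∫ t in Set.Ioc x 1, α t ∂Q| := abs_add_le _ _
      _ ≤ C * 1 + 4 * C := by
          refine add_le_add ?_ ?_
          · rw [abs_mul]
            exact mul_le_mul (hC x)
              (by rw [abs_of_nonneg ENNReal.toReal_nonneg]; exact toReal_le_one _)
              (abs_nonneg _) hC0
          · rw [abs_mul, abs_of_nonneg (by norm_num : (0:ℝ) ≤ 4)]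
            exact mul_le_mul_of_nonneg_left (hIocb x) (by norm_num)
      _ = 5 * C := by ring
  have hαSb : ∀ x, |α x * Sα x| ≤ C * (5 * C) := fun x => by
    rw [abs_mul]
    exact mul_le_mul (hC x) (hSαb x) (abs_nonneg _) hC0
  have hstep2a : ∫ u, α u * Sα u ∂Q2 = 2 * ∫ u, α u * Sα u * Fq Q u ∂Q := by
    rw [hQ2, map_max_integral (f := fun u => α u * Sα u) (hαm.mul hSαm)]
    exact prod_max_eq (α := fun u => α u * Sα u) (hαm.mul hSαm) hαSb
  have h01 : ∀ᵐ x ∂Q, x ∈ Set.Icc (0:ℝ) 1 := by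
    have e : {a : ℝ | ¬ a ∈ Set.Icc (0:ℝ) 1} = (Set.Icc (0:ℝ) 1)ᶜ := rfl
    rw [ae_iff, e]; exact hQsupp
  have hsub0 : Set.Iio (0:ℝ) ⊆ (Set.Icc (0:ℝ) 1)ᶜ :=
    fun t (ht : t ∈ Set.Iio 0) (hmem : t ∈ Set.Icc (0:ℝ) 1) => absurd hmem.1 (not_le.2 ht)
  have hsub1 : Set.Ioi (1:ℝ) ⊆ (Set.Icc (0:ℝ) 1)ᶜ :=
    fun t (ht : t ∈ Set.Ioi 1) (hmem : t ∈ Set.Icc (0:ℝ) 1) => absurd hmem.2 (not_le.2 ht)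
  have hIio0 : Q (Set.Iio 0) = 0 := measure_mono_null hsub0 hQsupp
  have hIoi1 : Q (Set.Ioi 1) = 0 := measure_mono_null hsub1 hQsupp
  have hae : ∀ᵐ x ∂Q, α x * Sα x * Fq Q x
      = α x * (α x * Fq Q x + 4 * hq Q α x) * Fq Q x := by
    filter_upwards [h01] with x hx
    obtain ⟨hx0, hx1⟩ := hx
    have hF0 : (Q (Set.Icc 0 x)).toReal = Fq Q x := by
      have le1 : Q (Set.Iic x) ≤ Q (Set.Icc 0 x) := by
        calc Q (Set.Iic x) ≤ Q (Set.Iio 0 ∪ Set.Icc 0 x) := measure_mono (fun t ht => by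
              rcases lt_or_ge t 0 with hlt | hge
              · exact Or.inl hlt
              · exact Or.inr ⟨hge, ht⟩)
          _ ≤ Q (Set.Iio 0) + Q (Set.Icc 0 x) := measure_union_le _ _
          _ = Q (Set.Icc 0 x) := by rw [hIio0, zero_add]
      have le2 : Q (Set.Icc 0 x) ≤ Q (Set.Iic x) := measure_mono (fun t ht => ht.2)
      simp only [Fq]
      exact congrArg ENNReal.toReal (le_antisymm le2 le1)
    have hIocEq : (∫ t in Set.Ioc x 1, α t ∂Q) = hq Q α x := by
      have hu : Set.Ioc x 1 ∪ Set.Ioi 1 = Set.Ioi x := Set.Ioc_union_Ioi_eq_Ioi hx1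
      have hInt : Integrable α Q := bdd_int hαm.aestronglyMeasurable hC
      calc (∫ t in Set.Ioc x 1, α t ∂Q)
          = (∫ t in Set.Ioc x 1, α t ∂Q) + ∫ t in Set.Ioi 1, α t ∂Q := by
            rw [setIntegral_measure_zero _ hIoi1, add_zero]
        _ = ∫ t in Set.Ioc x 1 ∪ Set.Ioi 1, α t ∂Q :=
            (setIntegral_union (Set.Ioc_disjoint_Ioi le_rfl) measurableSet_Ioi
              hInt.integrableOn hInt.integrableOn).symm
        _ = hq Q α x := by rw [hu]; rfl
    rw [hS x, hF0, hIocEq]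
  have hstep2b : ∫ u, α u * Sα u * Fq Q u ∂Q
      = ∫ u, α u * (α u * Fq Q u + 4 * hq Q α u) * Fq Q u ∂Q := integral_congr_ae hae
  have hαFm : Measurable fun u => α u * Fq Q u := hαm.mul Fq_meas
  have hαFb : ∀ u, |α u * Fq Q u| ≤ C := fun u => by
    rw [abs_mul]
    calc |α u| * |Fq Q u| ≤ C * 1 := mul_le_mul (hC u) (Fq_abs u) (abs_nonneg _) hC0
      _ = C := mul_one C
  have j1 : Integrable (fun u => (α u * Fq Q u) ^ 2) Q :=
    bdd_int (hαFm.pow_const 2).aestronglyMeasurable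
      (fun u => by rw [abs_pow]; exact pow_le_pow_left₀ (abs_nonneg _) (hαFb u) 2)
  have j2 : Integrable (fun u => α u * Fq Q u * hq Q α u) Q :=
    bdd_int (hαFm.mul hhm).aestronglyMeasurable (fun u => hmulCC _ _ (hαFb u) (hhb u))
  have hstep2c : ∫ u, α u * (α u * Fq Q u + 4 * hq Q α u) * Fq Q u ∂Q
      = (∫ u, (α u * Fq Q u) ^ 2 ∂Q) + 4 * ∫ u, α u * Fq Q u * hq Q α u ∂Q := by
    have e : ∀ u : ℝ, α u * (α u * Fq Q u + 4 * hq Q α u) * Fq Q u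
        = (α u * Fq Q u) ^ 2 + 4 * (α u * Fq Q u * hq Q α u) := fun u => by ring
    simp only [e]
    rw [integral_add j1 (j2.const_mul 4), integral_const_mul]
  have hAval : A = (∫ u, (α u * Fq Q u) ^ 2 ∂Q) + 4 * ∫ u, α u * Fq Q u * hq Q α u ∂Q := by
    have e : ∀ x : ℝ, gq Q α x ^ 2
        = (α x * Fq Q x) ^ 2 + 2 * (α x * Fq Q x * hq Q α x) + hq Q α x * hq Q α x :=
      fun x => by rw [hgsplit x]; ring
    rw [hA]
    simp only [e]
    have j3 : Integrable (fun x => hq Q α x * hq Q α x) Q :=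
      bdd_int (hhm.mul hhm).aestronglyMeasurable (fun x => hmulCC _ _ (hhb x) (hhb x))
    have j2' : Integrable (fun x => 2 * (α x * Fq Q x * hq Q α x)) Q := j2.const_mul 2
    have J2 : Integrable (fun x => (α x * Fq Q x) ^ 2 + 2 * (α x * Fq Q x * hq Q α x)) Q :=
      j1.add j2'
    rw [integral_add J2 j3, integral_add j1 j2', integral_const_mul, key7 hαm hC]
    ring
  rw [hstep2a, hstep2b, hstep2c, hAval]
  ring
end
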